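/- Let K be a field with more than two elements and let n ≥ 1. There is no subset S of 𝔽 such that for every representation (V,G) over K the following equivalence holds: [for all g₁,…,gₙ ∈ G the element (g₁−1)(g₂−1)⋯(gₙ−1) of KG annihilates V] if and only if [every f ∈ S is a polynomial identity of (V,G)]. In other words, the variety 𝔖ⁿ of representations of groups is not a polynomial variety. -/

import Mathlib

/-- over a field `K` with more than two elements, the variety `𝔖ⁿ` of
representations of groups (defined by `x ∘ (y₁ - 1)⋯(yₙ - 1) ≡ 0`) is not a polynomial
variety: no subset `S` of `𝔽 = FreeAlgebra K ℕ` has the property that a representation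
`(V, G)` satisfies the identity of `𝔖ⁿ` iff every `f ∈ S` is a polynomial identity of
`(V, G)`. -/
theorem Sn_is_not_polynomial (K : Type) [Field K] (hK : 3 ≤ Cardinal.mk K)
    (n : ℕ) (hn : 1 ≤ n) :
    ¬ ∃ S : Set (FreeAlgebra K ℕ),
        ∀ (G : Type) [Group G] (V : Type) [AddCommGroup V] [Module (MonoidAlgebra K G) V],
          ((∀ g : Fin n → G, ∀ v : V,
              (List.ofFn fun i => MonoidAlgebra.of K G (g i) - 1).prod • v = 0) ↔
           (∀ f ∈ S, ∀ μ : FreeAlgebra K ℕ →ₐ[K] MonoidAlgebra K G, ∀ v : V, μ f • v = 0)) := by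
  -- Find `a ∈ K` with `a ≠ 0` and `a ≠ 1` (possible since `|K| ≥ 3`).
  obtain ⟨a, ha0, ha1⟩ : ∃ a : K, a ≠ 0 ∧ a ≠ 1 := by
    obtain ⟨a, h1, h2⟩ := Cardinal.three_le hK 0 1
    exact ⟨a, h1, h2⟩
  rintro ⟨S, hS⟩
  -- Step 1: the trivial group forces every `f ∈ S` to vanish under all scalar substitutions.
  have h1 := hS Unit (MonoidAlgebra K Unit)
  have hLHS : ∀ g : Fin n → Unit, ∀ v : MonoidAlgebra K Unit,
      (List.ofFn fun i => MonoidAlgebra.of K Unit (g i) - 1).prod • v = 0 := by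
    intro g v
    have hfun : (fun i : Fin n => MonoidAlgebra.of K Unit (g i) - 1)
        = fun _ => (0 : MonoidAlgebra K Unit) := by
      funext i
      rw [Subsingleton.elim (g i) (1 : Unit), map_one, sub_self]
    rw [hfun, List.ofFn_const, List.prod_replicate, zero_pow (by omega), zero_smul]
  have hRHS := h1.mp hLHS
  have key : ∀ f ∈ S, ∀ φ : FreeAlgebra K ℕ →ₐ[K] K, φ f = 0 := by
    intro f hf φ
    have h := hRHS f hf ((Algebra.ofId K (MonoidAlgebra K Unit)).comp φ) 1
    rw [smul_eq_mul, mul_one] at h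
    have h0 : algebraMap K (MonoidAlgebra K Unit) (φ f) = 0 := h
    exact (algebraMap K (MonoidAlgebra K Unit)).injective (by simpa using h0)
  -- Step 2: the representation of `ℤ` on `K` via the character sending `1` to `a`.
  set χ : Multiplicative ℤ →* K := (Units.coeHom K).comp (zpowersHom Kˣ (Units.mk0 a ha0))
    with hχ
  set ψ : MonoidAlgebra K (Multiplicative ℤ) →ₐ[K] K :=
    MonoidAlgebra.lift K K (Multiplicative ℤ) χ with hψ
  letI : Module (MonoidAlgebra K (Multiplicative ℤ)) K := Module.compHom K ψ.toRingHom
  have hsmul : ∀ (r : MonoidAlgebra K (Multiplicative ℤ)) (v : K), r • v = ψ r * v :=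
    fun r v => rfl
  have h2 := hS (Multiplicative ℤ) K
  have hRHS2 : ∀ f ∈ S,
      ∀ μ : FreeAlgebra K ℕ →ₐ[K] MonoidAlgebra K (Multiplicative ℤ), ∀ v : K,
      μ f • v = 0 := by
    intro f hf μ v
    rw [hsmul]
    have hcomp : ψ (μ f) = (ψ.comp μ) f := rfl
    rw [hcomp, key f hf (ψ.comp μ), zero_mul]
  -- But the `𝔖ⁿ` identity fails for this representation.
  have hLHS2 := h2.mpr hRHS2 (fun _ => Multiplicative.ofAdd (1 : ℤ)) 1
  rw [hsmul, mul_one, List.ofFn_const, List.prod_replicate] at hLHS2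
  have hcalc : ψ ((MonoidAlgebra.of K (Multiplicative ℤ) (Multiplicative.ofAdd (1 : ℤ)) - 1) ^ n)
      = (a - 1) ^ n := by
    rw [hψ, map_pow, map_sub, MonoidAlgebra.lift_of,
      map_one (MonoidAlgebra.lift K K (Multiplicative ℤ) χ)]
    rw [hχ]
    simp [zpowersHom_apply]
  rw [hcalc] at hLHS2
  exact sub_ne_zero_of_ne ha1 ((pow_eq_zero_iff (by omega)).mp hLHS2)
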